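/- The q-derivative of the q-Chebyshev polynomial of the first kind satisfies D_q T_n(x,s,q) = [n]_q · U_{n-1}(x,s,q) for all n ≥ 1, where D_q f(x) = (f(x) − f(qx))/(x − qx) and [n]_q = 1 + q + ⋯ + q^{n-1}. -/

import Mathlib

open Finset

noncomputable section

/-- The field `ℚ(q,s,x)` of rational functions. -/
abbrev K : Type := FractionRing (MvPolynomial (Fin 3) ℚ)

def q : K := algebraMap (MvPolynomial (Fin 3) ℚ) K (MvPolynomial.X 0)
def s : K := algebraMap (MvPolynomial (Fin 3) ℚ) K (MvPolynomial.X 1)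
def x : K := algebraMap (MvPolynomial (Fin 3) ℚ) K (MvPolynomial.X 2)

/-- q-Chebyshev polynomials of the first kind as functions of the variable `x`:
`T 0 = 1`, `T 1 = x`, `T n = (1+q^(n-1)) x T (n-1) + q^(n-1) s T (n-2)`. -/
def chebT : ℕ → K → K
  | 0, _ => 1
  | 1, x => x
  | (n + 2), x => (1 + q ^ (n + 1)) * x * chebT (n + 1) x + q ^ (n + 1) * s * chebT n x

/-- q-Chebyshev polynomials of the second kind as functions of the variable `x`:
`U 0 = 1`, `U 1 = (1+q)x`, `U n = (1+q^n) x U (n-1) + q^(n-1) s U (n-2)`. -/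
def chebU : ℕ → K → K
  | 0, _ => 1
  | 1, x => (1 + q) * x
  | (n + 2), x => (1 + q ^ (n + 2)) * x * chebU (n + 1) x + q ^ (n + 1) * s * chebU n x

lemma chebT_rec (n : ℕ) (y : K) :
    chebT (n + 2) y = (1 + q ^ (n + 1)) * y * chebT (n + 1) y + q ^ (n + 1) * s * chebT n y := rfl

lemma chebU_rec (n : ℕ) (y : K) :
    chebU (n + 2) y = (1 + q ^ (n + 2)) * y * chebU (n + 1) y + q ^ (n + 1) * s * chebU n y := rfl

/-- Companion identity: `T (n+2) = x * U (n+1) + q^(n+1) * s * U n`. -/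
lemma q_ne_one : q ≠ 1 := by
  intro hc
  have hinj := IsFractionRing.injective (MvPolynomial (Fin 3) ℚ) K
  have h3 : (MvPolynomial.X 0 : MvPolynomial (Fin 3) ℚ) = 1 := by
    apply hinj; simpa [q] using hc
  have := congrArg (MvPolynomial.coeff 0) h3
  simp [MvPolynomial.coeff_X] at this

lemma chebT_eq_chebU : ∀ n : ℕ,
    chebT (n + 2) x = x * chebU (n + 1) x + q ^ (n + 1) * s * chebU n x := by
  intro n
  induction n using Nat.twoStepInduction with
  | zero => simp [chebT, chebU]; ring
  | one => simp [chebT, chebU]; ring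
  | more n ih1 ih2 =>
    rw [chebT_rec (n + 2), ih1, ih2, chebU_rec (n + 1), chebU_rec n]
    ring

lemma key : ∀ n : ℕ,
    chebT (n + 1) x - chebT (n + 1) (q * x) =
      (x - q * x) * ((∑ i ∈ range (n + 1), q ^ i) * chebU n x) := by
  intro n
  induction n using Nat.twoStepInduction with
  | zero => simp [chebT, chebU]
  | one =>
    simp only [chebT, chebU, Finset.sum_range_succ, Finset.sum_range_one]
    ring
  | more n ih1 ih2 =>
    have hstep : chebT (n + 1 + 2) x - chebT (n + 1 + 2) (q * x) =
        (1 + q ^ (n + 2)) * (x * chebT (n + 2) x - (q * x) * chebT (n + 2) (q * x)) +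
          q ^ (n + 2) * s * (chebT (n + 1) x - chebT (n + 1) (q * x)) := by
      rw [chebT_rec (n + 1) x, chebT_rec (n + 1) (q * x)]; ring
    have hT2qx : chebT (n + 2) (q * x) =
        chebT (n + 2) x - (x - q * x) * ((∑ i ∈ range (n + 2), q ^ i) * chebU (n + 1) x) := by
      rw [← ih2]; ring
    rw [hstep, hT2qx, ih1, chebT_eq_chebU n, chebU_rec n]
    simp only [geom_sum_eq q_ne_one]
    have hq : q - 1 ≠ 0 := sub_ne_zero.mpr q_ne_one
    field_simp
    ring

lemma x_sub_qx_ne_zero : x - q * x ≠ 0 := by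
  have h : x - q * x =
      algebraMap (MvPolynomial (Fin 3) ℚ) K
        (MvPolynomial.X 2 - MvPolynomial.X 0 * MvPolynomial.X 2) := by
    simp [x, q, map_sub, map_mul]
  rw [h]
  intro hc
  have hinj := IsFractionRing.injective (MvPolynomial (Fin 3) ℚ) K
  have h0 : (MvPolynomial.X 2 - MvPolynomial.X 0 * MvPolynomial.X 2 :
      MvPolynomial (Fin 3) ℚ) = 0 := by
    apply hinj
    simpa using hc
  have h1 : (MvPolynomial.X 2 * (1 - MvPolynomial.X 0) :
      MvPolynomial (Fin 3) ℚ) = 0 := by linear_combination h0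
  rcases mul_eq_zero.mp h1 with h2 | h2
  · exact MvPolynomial.X_ne_zero _ h2
  · have h3 : (MvPolynomial.X 0 : MvPolynomial (Fin 3) ℚ) = 1 := by linear_combination -h2
    have := congrArg (MvPolynomial.coeff 0) h3
    simp [MvPolynomial.coeff_X] at this

/-- `D_q T_n = [n]_q U_{n-1}`, where `D_q f(x) = (f(x) - f(qx))/(x - qx)` is the
q-differentiation operator and `[n]_q = 1 + q + ⋯ + q^(n-1)`, evaluated at the
generic point `x`. -/
theorem qDeriv_chebT (n : ℕ) (hn : 1 ≤ n) :
    (chebT n x - chebT n (q * x)) / (x - q * x) =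
      (∑ i ∈ range n, q ^ i) * chebU (n - 1) x := by
  obtain ⟨m, rfl⟩ : ∃ m, n = m + 1 := ⟨n - 1, by omega⟩
  rw [key m, Nat.add_sub_cancel, mul_div_cancel_left₀ _ x_sub_qx_ne_zero]

end
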